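/- Consequently, for any connected graph G, the vc-treewidth of G is at most its treewidth plus one: κ_vc-tree(G) ≤ κ_tree(G) + 1. -/
import Mathlib


open SimpleGraph

/-- The vertex set (in `VT`) of the component of `T - z` containing `x`. -/
def compSet {VT : Type*} (T : SimpleGraph VT) (z : VT) (x : {w : VT // w ≠ z}) : Set VT :=
  Subtype.val '' {y | (SimpleGraph.comap (Subtype.val : {w : VT // w ≠ z} → VT) T).Reachable x y}

/-- The part `V_x = β(V(T^{(z)}_x)) \ β(z)` of the star partition at `z`. -/
def starPart {VG VT : Type*} (β : VT → Set VG) (T : SimpleGraph VT) (z : VT)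
    (x : {w : VT // w ≠ z}) : Set VG :=
  (⋃ w ∈ compSet T z x, β w) \ β z

/-- `(T, β)` is a vertex-cut tree of `G`: `T` is a tree, (VC1) `β` covers `V(G)`,
(VC2) the intersection condition along paths of `T`, and (VC3) at each `z` the sets
`(β z, V_1, ..., V_δ)` form a star partition of `V(G)`. -/
def IsVCTree {VG VT : Type*} (G : SimpleGraph VG) (T : SimpleGraph VT)
    (β : VT → Set VG) : Prop :=
  T.IsTree ∧
  (⋃ z, β z) = Set.univ ∧
  (∀ (x y z : VT) (p : T.Walk x y), z ∈ p.support → β x ∩ β y ⊆ β z) ∧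
  (∀ (z : VT) (x y : {w : VT // w ≠ z}),
    ¬ (SimpleGraph.comap (Subtype.val : {w : VT // w ≠ z} → VT) T).Reachable x y →
    Disjoint (starPart β T z x) (starPart β T z y)) ∧
  (∀ z : VT, (β z ∪ ⋃ x : {w : VT // w ≠ z}, starPart β T z x) = Set.univ) ∧
  (∀ (z : VT) (x : {w : VT // w ≠ z}) (u v : VG), G.Adj u v →
    u ∈ starPart β T z x → v ∈ β z ∨ v ∈ starPart β T z x)

/-- The vc-width `max_z |β(z)|`. -/
noncomputable def vcWidth {VG VT : Type*} [Fintype VT] (β : VT → Set VG) : ℕ :=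
  Finset.univ.sup fun z => (β z).ncard

/-- The vc-treewidth of `G`: least vc-width over all vertex-cut trees of `G`. -/
noncomputable def vcTreewidth {VG : Type*} (G : SimpleGraph VG) : ℕ :=
  sInf {w | ∃ (m : ℕ) (T : SimpleGraph (Fin m)) (β : Fin m → Set VG),
    IsVCTree G T β ∧ w = vcWidth β}

/-- `(T, β)` is a tree decomposition of `G`. -/
def IsTreeDecomp {VG VT : Type*} (G : SimpleGraph VG) (T : SimpleGraph VT)
    (β : VT → Set VG) : Prop :=
  T.IsTree ∧
  (⋃ z, β z) = Set.univ ∧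
  (∀ (x y z : VT) (p : T.Walk x y), z ∈ p.support → β x ∩ β y ⊆ β z) ∧
  (∀ u v : VG, G.Adj u v → ∃ z : VT, u ∈ β z ∧ v ∈ β z)

/-- The treewidth of `G`: least width `max_z |β(z)| − 1` over all tree decompositions. -/
noncomputable def treewidthG {VG : Type*} (G : SimpleGraph VG) : ℕ :=
  sInf {w | ∃ (m : ℕ) (T : SimpleGraph (Fin m)) (β : Fin m → Set VG),
    IsTreeDecomp G T β ∧ w = vcWidth β - 1}

lemma walk_reach {VT : Type*} {T : SimpleGraph VT} {z : VT} :
    ∀ {a b : VT} (p : T.Walk a b), z ∉ p.support → ∀ (ha : a ≠ z) (hb : b ≠ z),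
    (SimpleGraph.comap (Subtype.val : {w : VT // w ≠ z} → VT) T).Reachable ⟨a, ha⟩ ⟨b, hb⟩ := by
  intro a b p
  induction p with
  | nil => exact fun _ ha hb => Reachable.refl _
  | @cons a c b h p ih =>
    intro hz ha hb
    rw [Walk.support_cons, List.mem_cons] at hz
    push_neg at hz
    have hc : c ≠ z := fun hcz => hz.2 (hcz ▸ p.start_mem_support)
    have hadj : (SimpleGraph.comap (Subtype.val : {w : VT // w ≠ z} → VT) T).Adj
        ⟨a, ha⟩ ⟨c, hc⟩ := h
    exact hadj.reachable.trans (ih hz.2 hc hb)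

lemma td_to_vc {VG VT : Type*} {G : SimpleGraph VG} {T : SimpleGraph VT}
    {β : VT → Set VG} (h : IsTreeDecomp G T β) : IsVCTree G T β := by
  obtain ⟨htree, hcov, hpath, hedge⟩ := h
  have hconn : T.Connected := htree.isConnected
  refine ⟨htree, hcov, hpath, ?_, ?_, ?_⟩
  · intro z x y hreach
    rw [Set.disjoint_left]
    rintro u ⟨hux, huz⟩ ⟨huy, -⟩
    rw [Set.mem_iUnion₂] at hux huy
    obtain ⟨w, ⟨⟨wv, hwz⟩, hwr, rfl⟩, huw⟩ := hux
    obtain ⟨w', ⟨⟨w'v, hw'z⟩, hw'r, rfl⟩, huw'⟩ := huy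
    obtain ⟨p⟩ := hconn wv w'v
    by_cases hz : z ∈ p.support
    · exact huz (hpath wv w'v z p hz ⟨huw, huw'⟩)
    · exact hreach (hwr.trans ((walk_reach p hz hwz hw'z).trans hw'r.symm))
  · intro z
    ext u
    simp only [Set.mem_union, Set.mem_univ, iff_true]
    by_cases huz : u ∈ β z
    · exact Or.inl huz
    · right
      have hu : u ∈ ⋃ w, β w := by rw [hcov]; trivial
      rw [Set.mem_iUnion] at hu
      obtain ⟨w, huw⟩ := hu
      have hwz : w ≠ z := fun hw => huz (hw ▸ huw)
      rw [Set.mem_iUnion]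
      refine ⟨⟨w, hwz⟩, ?_, huz⟩
      rw [Set.mem_iUnion₂]
      exact ⟨w, ⟨⟨w, hwz⟩, Reachable.refl _, rfl⟩, huw⟩
  · intro z x u v hadj hu
    by_cases hvz : v ∈ β z
    · exact Or.inl hvz
    · right
      obtain ⟨hux, huz⟩ := hu
      rw [Set.mem_iUnion₂] at hux
      obtain ⟨w, ⟨⟨wv, hwz⟩, hwr, rfl⟩, huw⟩ := hux
      obtain ⟨b, hub, hvb⟩ := hedge u v hadj
      have hbz : b ≠ z := fun hb => huz (hb ▸ hub)
      obtain ⟨p⟩ := hconn wv b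
      have hz : z ∉ p.support := fun hz => huz (hpath wv b z p hz ⟨huw, hub⟩)
      refine ⟨?_, hvz⟩
      rw [Set.mem_iUnion₂]
      exact ⟨b, ⟨⟨b, hbz⟩, hwr.trans (walk_reach p hz hwz hbz), rfl⟩, hvb⟩

lemma td_nonempty {VG : Type*} (G : SimpleGraph VG) :
    {w | ∃ (m : ℕ) (T : SimpleGraph (Fin m)) (β : Fin m → Set VG),
      IsTreeDecomp G T β ∧ w = vcWidth β - 1}.Nonempty := by
  refine ⟨vcWidth (fun _ : Fin 1 => (Set.univ : Set VG)) - 1, 1, ⊥,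
    fun _ => Set.univ, ⟨?_, ?_, ?_, ?_⟩, rfl⟩
  · constructor
    · exact SimpleGraph.Connected.mk (fun a b => by
        rw [Subsingleton.elim a b])
    · intro v c hc
      cases c with
      | nil => exact hc.ne_nil rfl
      | cons h _ => exact h.elim
  · exact Set.iUnion_const _
  · intro x y z p _
    simp
  · exact fun u v _ => ⟨0, trivial, trivial⟩

/-- for any connected graph `G`, `κ_vc-tree(G) ≤ κ_tree(G) + 1`. -/
theorem vcTreewidth_le_treewidth_add_one {VG : Type*} [Fintype VG]
    (G : SimpleGraph VG) (hG : G.Connected) :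
    vcTreewidth G ≤ treewidthG G + 1 := by
  have hmem : treewidthG G ∈ {w | ∃ (m : ℕ) (T : SimpleGraph (Fin m))
      (β : Fin m → Set VG), IsTreeDecomp G T β ∧ w = vcWidth β - 1} :=
    Nat.sInf_mem (td_nonempty G)
  obtain ⟨m, T, β, htd, heq⟩ := hmem
  have hvc : vcTreewidth G ≤ vcWidth β :=
    Nat.sInf_le ⟨m, T, β, td_to_vc htd, rfl⟩
  omega
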